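/- Fix x and suppose p(x | y = k) > 0 for at least one k, π_k > 0 for all k, Π ∈ ℝ^{M×K} row-stochastic with full column rank, π̄ ∈ Δ°_{M-1}. Define η(x) ∈ Δ_{K-1} by η_k(x) = π_k p(x|y=k)/p(x) with p(x) = Σ_k π_k p(x|y=k), and η̄_m(x) = π̄_m p^m(x) / Σ_{m'} π̄_{m'} p^{m'}(x) with p^m(x) = Σ_k Π_{m,k} p(x|y=k). Then knowing η̄(x), π, π̄, and Π determines η(x) uniquely: η(x) is the unique w ∈ Δ_{K-1} such that N(D_{π̄} Π D_π^{-1} w) = η̄(x), where N is normalization by the entry sum. -/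

import Mathlib

open Finset

/-- Identifiability: the original class posterior η is the unique simplex vector w
with N(D_{π̄} Π D_π^{-1} w) = η̄. -/
theorem posterior_identifiable_from_surrogate
    (K M : ℕ) (p π : Fin K → ℝ) (πb : Fin M → ℝ)
    (Pi : Matrix (Fin M) (Fin K) ℝ)
    (hp0 : ∀ k, 0 ≤ p k) (hpex : ∃ k, 0 < p k)
    (hπ : ∀ k, 0 < π k) (hπsum : ∑ k, π k = 1)
    (hπb : ∀ m, 0 < πb m) (hπbsum : ∑ m, πb m = 1)
    (hPi0 : ∀ m k, 0 ≤ Pi m k) (hPirow : ∀ m, ∑ k, Pi m k = 1)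
    (hrank : Function.Injective Pi.mulVec)
    (px : ℝ) (hpx : px = ∑ k, π k * p k)
    (η : Fin K → ℝ) (hη : ∀ k, η k = π k * p k / px)
    (pm : Fin M → ℝ) (hpm : ∀ m, pm m = ∑ k, Pi m k * p k)
    (ηb : Fin M → ℝ) (hηb : ∀ m, ηb m = πb m * pm m / ∑ m', πb m' * pm m')
    (N : (Fin M → ℝ) → Fin M → ℝ) (hN : ∀ a j, N a j = a j / ∑ i, a i)
    (A : Matrix (Fin M) (Fin K) ℝ)
    (hA : A = Matrix.diagonal πb * Pi * Matrix.diagonal π⁻¹) :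
    ((∀ i, 0 ≤ η i) ∧ ∑ i, η i = 1) ∧ N (A.mulVec η) = ηb ∧
      ∀ w : Fin K → ℝ, (∀ i, 0 ≤ w i) → ∑ i, w i = 1 →
        N (A.mulVec w) = ηb → w = η := by
  have hπne : ∀ k, π k ≠ 0 := fun k => (hπ k).ne'
  -- positivity of px
  have hpxp : 0 < px := by
    rw [hpx]
    obtain ⟨k0, hk0⟩ := hpex
    exact Finset.sum_pos' (fun k _ => mul_nonneg (hπ k).le (hp0 k))
      ⟨k0, Finset.mem_univ _, mul_pos (hπ k0) hk0⟩
  -- entries of A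
  have hAentry : ∀ m k, A m k = πb m * Pi m k * (π k)⁻¹ := by
    intro m k
    simp [hA, Matrix.mul_diagonal, Matrix.diagonal_mul]
  -- mulVec formula
  have hAv : ∀ (v : Fin K → ℝ) (m : Fin M),
      A.mulVec v m = πb m * ∑ k, Pi m k * ((π k)⁻¹ * v k) := by
    intro v m
    rw [Matrix.mulVec, dotProduct, Finset.mul_sum]
    exact Finset.sum_congr rfl fun k _ => by rw [hAentry]; ring
  -- injectivity of A.mulVec
  have hAinj : Function.Injective A.mulVec := by
    intro u v h
    have h1 : Pi.mulVec (fun k => (π k)⁻¹ * u k) = Pi.mulVec (fun k => (π k)⁻¹ * v k) := by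
      funext m
      have hm := congrFun h m
      rw [hAv, hAv] at hm
      exact mul_left_cancel₀ (hπb m).ne' hm
    have h2 := hrank h1
    funext k
    have h3 := congrFun h2 k
    exact mul_left_cancel₀ (inv_ne_zero (hπne k)) h3
  -- column positivity
  have hcolpos : ∀ k, 0 < ∑ m, πb m * Pi m k := by
    intro k
    have hex : ∃ m, 0 < Pi m k := by
      by_contra h
      push_neg at h
      have hz : ∀ m, Pi m k = 0 := fun m => le_antisymm (h m) (hPi0 m k)
      have : Pi.mulVec (fun j => if j = k then (1:ℝ) else 0) = Pi.mulVec 0 := by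
        funext m
        simp [Matrix.mulVec, dotProduct, mul_ite, hz m]
      have := congrFun (hrank this) k
      simp at this
    obtain ⟨m0, hm0⟩ := hex
    exact Finset.sum_pos' (fun m _ => mul_nonneg (hπb m).le (hPi0 m k))
      ⟨m0, Finset.mem_univ _, mul_pos (hπb m0) hm0⟩
  -- sum of A.mulVec v
  have hsum : ∀ v : Fin K → ℝ,
      ∑ m, A.mulVec v m = ∑ k, (∑ m, πb m * Pi m k) * ((π k)⁻¹ * v k) := by
    intro v
    simp only [hAv, Finset.mul_sum]
    rw [Finset.sum_comm]
    refine Finset.sum_congr rfl fun k _ => ?_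
    rw [Finset.sum_mul]
    exact Finset.sum_congr rfl fun m _ => by ring
  have hsumpos : ∀ v : Fin K → ℝ, (∀ i, 0 ≤ v i) → ∑ i, v i = 1 →
      0 < ∑ m, A.mulVec v m := by
    intro v hv0 hv1
    obtain ⟨k0, -, hk0⟩ : ∃ k ∈ Finset.univ, 0 < v k := by
      by_contra h
      push_neg at h
      have : ∑ i, v i = 0 := Finset.sum_eq_zero fun i hi =>
        le_antisymm (h i hi) (hv0 i)
      rw [hv1] at this; norm_num at this
    rw [hsum]
    refine Finset.sum_pos' (fun k _ => mul_nonneg (hcolpos k).le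
      (mul_nonneg (inv_nonneg.2 (hπ k).le) (hv0 k)))
      ⟨k0, Finset.mem_univ _, mul_pos (hcolpos k0) (mul_pos (inv_pos.2 (hπ k0)) hk0)⟩
  -- η is in the simplex
  have hη0 : ∀ i, 0 ≤ η i := fun i => by
    rw [hη]; exact div_nonneg (mul_nonneg (hπ i).le (hp0 i)) hpxp.le
  have hη1 : ∑ i, η i = 1 := by
    simp only [hη, div_eq_mul_inv, ← Finset.sum_mul]
    rw [← hpx, mul_inv_cancel₀ hpxp.ne']
  -- A.mulVec η m = πb m * pm m / px
  have hAη : ∀ m, A.mulVec η m = πb m * pm m / px := by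
    intro m
    rw [hAv, hpm, mul_div_assoc, Finset.sum_div]
    congr 1
    refine Finset.sum_congr rfl fun k _ => ?_
    have h1 : (π k)⁻¹ * (π k * p k / px) = p k / px := by
      field_simp
      rw [div_eq_iff (hπne k)]
      ring
    rw [hη, h1, mul_div_assoc]
  -- sum of πb * pm is positive
  have hSpos : 0 < ∑ m', πb m' * pm m' := by
    have := hsumpos η hη0 hη1
    have heq : ∑ m, A.mulVec η m = (∑ m', πb m' * pm m') / px := by
      rw [Finset.sum_div]
      exact Finset.sum_congr rfl fun m _ => hAη m
    rw [heq] at this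
    exact (div_pos_iff.1 this).elim (fun h => h.1) (fun h => absurd h.2 (not_lt.2 hpxp.le))
  -- N(Aη) = ηb
  have hNAη : N (A.mulVec η) = ηb := by
    funext m
    rw [hN, hηb, hAη]
    have heq : ∑ i, A.mulVec η i = (∑ m', πb m' * pm m') / px := by
      rw [Finset.sum_div]
      exact Finset.sum_congr rfl fun m _ => hAη m
    rw [heq]
    rw [div_div_div_eq]
    rw [mul_comm (πb m * pm m) px, mul_div_mul_left _ _ hpxp.ne']
  refine ⟨⟨hη0, hη1⟩, hNAη, ?_⟩
  -- uniqueness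
  intro w hw0 hw1 hNw
  have hSw := hsumpos w hw0 hw1
  have hSη := hsumpos η hη0 hη1
  set Sw := ∑ m, A.mulVec w m with hSwdef
  set Sη := ∑ m, A.mulVec η m with hSηdef
  have key : A.mulVec (Sw⁻¹ • w) = A.mulVec (Sη⁻¹ • η) := by
    funext m
    rw [Matrix.mulVec_smul, Matrix.mulVec_smul]
    have h1 := congrFun hNw m
    have h2 := congrFun hNAη m
    rw [hN] at h1 h2
    have : A.mulVec w m / Sw = A.mulVec η m / Sη := by rw [h1, h2]
    simpa [div_eq_inv_mul] using this
  have hwη := hAinj key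
  have hwk : ∀ k, w k = (Sw * Sη⁻¹) * η k := by
    intro k
    have := congrFun hwη k
    simp only [_root_.Pi.smul_apply, smul_eq_mul] at this
    field_simp at this ⊢
    nlinarith [this]
  have hone : Sw * Sη⁻¹ = 1 := by
    have : ∑ i, w i = (Sw * Sη⁻¹) * ∑ i, η i := by
      rw [Finset.mul_sum]
      exact Finset.sum_congr rfl fun k _ => hwk k
    rw [hw1, hη1, mul_one] at this
    exact this.symm
  funext k
  rw [hwk k, hone, one_mul]
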